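/- Let K be a field of characteristic zero containing all roots of unity, and let C be a smooth conic over K with no K-points. Then every non-trivial automorphism of C over K of finite order has order 2. -/

import Mathlib

open Matrix Polynomial

/-- An element of the center of `GL (Fin 3) K` is a scalar matrix. -/
private lemma aux_center_scalar {K : Type*} [Field K] (X : GL (Fin 3) K)
    (hX : X ∈ Subgroup.center (GL (Fin 3) K)) :
    ∃ r : K, (X : Matrix (Fin 3) (Fin 3) K) = Matrix.scalar (Fin 3) r := by
  have h := Matrix.mem_range_scalar_of_commute_transvectionStruct
      (M := (X : Matrix (Fin 3) (Fin 3) K)) ?_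
  · obtain ⟨r, hr⟩ := h; exact ⟨r, hr.symm⟩
  · intro t
    set T : GL (Fin 3) K := ⟨t.toMatrix, t.inv.toMatrix, t.mul_inv, t.inv_mul⟩ with hT
    exact congrArg Units.val (Subgroup.mem_center_iff.mp hX T)

/-- The determinant identity for a similitude of a nondegenerate form in 3 variables. -/
private lemma aux_det_sq {K : Type*} [Field K]
    (q : QuadraticForm K (Fin 3 → K))
    (hsmooth : (QuadraticMap.polarBilin q).Nondegenerate)
    (M : Matrix (Fin 3) (Fin 3) K) (c : Kˣ)
    (hA : ∀ v : Fin 3 → K, q (M.mulVec v) = (c : K) * q v) :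
    M.det ^ 2 = (c : K) ^ 3 := by
  set P := QuadraticMap.polarBilin q with hP
  set G := LinearMap.BilinForm.toMatrix' P with hG
  have hGB : Matrix.toBilin' G = P := Matrix.toBilin'_toMatrix' P
  have hpol : ∀ u v : Fin 3 → K, P (M.mulVec u) (M.mulVec v) = (c:K) * P u v := by
    intro u v
    simp only [hP, QuadraticMap.polarBilin_apply_apply, QuadraticMap.polar,
      ← Matrix.mulVec_add, hA]
    ring
  have hcong : Mᵀ * G * M = (c : K) • G := by
    apply Matrix.toBilin'.injective
    apply LinearMap.BilinForm.ext
    intro u v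
    have h1 : Matrix.toBilin' (Mᵀ * G * M) u v = P (M.mulVec u) (M.mulVec v) := by
      rw [Matrix.toBilin'_apply', ← hGB, Matrix.toBilin'_apply']
      rw [← Matrix.mulVec_mulVec, ← Matrix.mulVec_mulVec, Matrix.dotProduct_mulVec u Mᵀ,
        Matrix.vecMul_transpose]
    rw [h1, hpol]
    simp [Matrix.toBilin'_apply', ← hGB]
  have hdetG : G.det ≠ 0 := by
    rw [← LinearMap.BilinForm.nondegenerate_toBilin'_iff_det_ne_zero, hGB]
    exact hsmooth
  have := congrArg Matrix.det hcong
  rw [Matrix.det_mul, Matrix.det_mul, Matrix.det_transpose, Matrix.det_smul] at this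
  have h3 : M.det * G.det * M.det = (c:K)^3 * G.det := by simpa [Fintype.card_fin] using this
  have h4 : M.det ^ 2 * G.det = (c:K)^3 * G.det := by linear_combination h3
  exact mul_right_cancel₀ hdetG h4

/-- A finite-order isometry of an anisotropic form in three variables squares to one. -/
private lemma aux_sq_eq_one {K : Type*} [Field K] [CharZero K]
    (q : QuadraticForm K (Fin 3 → K)) (hnopoints : q.Anisotropic)
    (B : GL (Fin 3) K)
    (hiso : ∀ v : Fin 3 → K, q ((B : Matrix (Fin 3) (Fin 3) K).mulVec v) = q v)
    (m : ℕ) (hm : 0 < m) (ζ : K) (hζ : IsPrimitiveRoot ζ m)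
    (hBm : B ^ m = 1) : B ^ 2 = 1 := by
  set f : Module.End K (Fin 3 → K) := Matrix.toLinAlgEquiv' (B : Matrix (Fin 3) (Fin 3) K) with hf
  have hfm : f ^ m = 1 := by
    rw [hf, ← map_pow, ← _root_.map_one (Matrix.toLinAlgEquiv' (n := Fin 3) (R := K))]
    congr 1
    have := congrArg Units.val hBm
    simpa [Units.val_pow_eq_pow_val] using this
  have hmK : (m : K) ≠ 0 := Nat.cast_ne_zero.mpr hm.ne'
  have hbig_sep : (X ^ m - C (1 : K)).Separable := separable_X_pow_sub_C 1 hmK one_ne_zero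
  have hbig_splits : (X ^ m - C (1 : K)).Splits := by
    rw [Polynomial.C_1, Polynomial.X_pow_sub_one_eq_prod hm hζ]
    exact Splits.prod fun ζ' _ => Splits.X_sub_C _
  have hbig_ne : (X ^ m - C (1 : K)) ≠ 0 :=
    (monic_X_pow_sub_C (1 : K) hm.ne').ne_zero
  set p := minpoly K f with hp
  have hdvd : p ∣ X ^ m - C (1 : K) := minpoly.dvd K f (by simp [map_pow, hfm])
  have hpsep : p.Separable := hbig_sep.of_dvd hdvd
  have hint : IsIntegral K f := Algebra.IsIntegral.isIntegral f
  have hmonic : p.Monic := minpoly.monic hint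
  have hpsplits : p.Splits :=
    hbig_splits.of_dvd hbig_ne hdvd
  have hroot : ∀ r ∈ p.roots, r = 1 ∨ r = -1 := by
    intro r hr
    have hisr : p.IsRoot r := isRoot_of_mem_roots hr
    have hev : f.HasEigenvalue r := Module.End.hasEigenvalue_iff_isRoot.mpr hisr
    obtain ⟨v, hv⟩ := hev.exists_hasEigenvector
    have hfv : f v = r • v := hv.apply_eq_smul
    have hqv : q v ≠ 0 := fun h => hv.2 (hnopoints v h)
    have h1 : q (f v) = q v := by
      rw [hf]; exact hiso v
    rw [hfv, QuadraticMap.map_smul, smul_eq_mul] at h1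
    have : (r - 1) * (r + 1) * q v = 0 := by linear_combination h1
    rcases mul_eq_zero.mp this with h | h
    · rcases mul_eq_zero.mp h with h' | h'
      · left; exact sub_eq_zero.mp h'
      · right; exact eq_neg_of_add_eq_zero_left h'
    · exact absurd h hqv
  have hle : p.roots ≤ ({1, -1} : Multiset K) := by
    rw [Multiset.le_iff_subset (nodup_roots hpsep)]
    intro r hr
    rcases hroot r hr with h | h <;> simp [h]
  have hpeq : p = (p.roots.map fun a => X - C a).prod :=
    hpsplits.eq_prod_roots_of_monic hmonic
  have hdvd2 : p ∣ X ^ 2 - C (1 : K) := by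
    have h2 : (X ^ 2 - C (1 : K)) = ((({1, -1} : Multiset K)).map fun a => X - C a).prod := by
      simp [Multiset.insert_eq_cons]
      ring
    rw [hpeq, h2]
    exact Multiset.prod_dvd_prod_of_le (Multiset.map_le_map hle)
  have hf2 : f ^ 2 = 1 := by
    obtain ⟨s, hs⟩ := hdvd2
    have := congrArg (aeval f) hs
    rw [_root_.map_mul, minpoly.aeval, zero_mul, map_sub, map_pow, aeval_X, aeval_C,
      _root_.map_one] at this
    exact sub_eq_zero.mp (by rw [this])
  have hB2 : (B : Matrix (Fin 3) (Fin 3) K) ^ 2 = 1 := by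
    apply Matrix.toLinAlgEquiv'.injective
    rw [map_pow, _root_.map_one]
    exact hf2
  exact Units.ext (by simpa [Units.val_pow_eq_pow_val] using hB2)

/-!
STATEMENT 0.  A smooth conic `C ⊂ ℙ²_K` without `K`-points is given by a nondegenerate
anisotropic quadratic form `q` in three variables (smoothness = nondegeneracy of `q`,
`C(K) = ∅` = anisotropy of `q`).  Every `K`-automorphism of `C` is induced by a projective
linear transformation preserving `q` up to a scalar, i.e. by an element of
`PGL₃(K) = GL₃(K) ⧸ center` admitting a lift `A ∈ GL₃(K)` with `q ∘ A = c • q`.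
The claim: if `K` has characteristic zero and contains all roots of unity, then every
such automorphism of finite order which is non-trivial has order exactly `2`.
-/
theorem conic_without_points_auto_order_two
    (K : Type*) [Field K] [CharZero K]
    (hroots : ∀ n : ℕ, 0 < n → ∃ ζ : K, IsPrimitiveRoot ζ n)
    (q : QuadraticForm K (Fin 3 → K))
    (hsmooth : (QuadraticMap.polarBilin q).Nondegenerate)
    (hnopoints : q.Anisotropic)
    (A : GL (Fin 3) K)
    (hA : ∃ c : Kˣ, ∀ v : Fin 3 → K, q ((A : Matrix (Fin 3) (Fin 3) K).mulVec v) = (c : K) * q v)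
    (g : GL (Fin 3) K ⧸ Subgroup.center (GL (Fin 3) K))
    (hg : g = QuotientGroup.mk A)
    (hfin : 0 < orderOf g) (hnontriv : g ≠ 1) :
    orderOf g = 2 := by
  obtain ⟨c, hc⟩ := hA
  set M : Matrix (Fin 3) (Fin 3) K := (A : Matrix (Fin 3) (Fin 3) K) with hM
  have hdet : M.det ^ 2 = (c : K) ^ 3 := aux_det_sq q hsmooth M c hc
  set d : Kˣ := Matrix.GeneralLinearGroup.det A with hd
  have hdval : (d : K) = M.det := rfl
  set e : Kˣ := d * c⁻¹ with he
  have he2 : (e : K) ^ 2 = (c : K) := by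
    have hc0 : (c : K) ≠ 0 := c.ne_zero
    push_cast [he]
    field_simp
    rw [hdval, hdet]
  set E : GL (Fin 3) K :=
    Units.map (algebraMap K (Matrix (Fin 3) (Fin 3) K)).toMonoidHom e with hE
  have hEval : (E : Matrix (Fin 3) (Fin 3) K) = Matrix.scalar (Fin 3) (e : K) := rfl
  have hEcenter : E ∈ Subgroup.center (GL (Fin 3) K) := by
    rw [Subgroup.mem_center_iff]
    intro x
    apply Units.ext
    show (x : Matrix (Fin 3) (Fin 3) K) * E = (E : Matrix (Fin 3) (Fin 3) K) * x
    rw [hEval]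
    exact (Matrix.scalar_commute (e : K) (fun r => Commute.all _ r) _).symm
  set A' : GL (Fin 3) K := E⁻¹ * A with hA'
  have hA'val : (A' : Matrix (Fin 3) (Fin 3) K) = ((e⁻¹ : Kˣ) : K) • M := by
    rw [hA']
    show ((E⁻¹ : GL (Fin 3) K) : Matrix (Fin 3) (Fin 3) K) * M = _
    have : ((E⁻¹ : GL (Fin 3) K) : Matrix (Fin 3) (Fin 3) K)
        = Matrix.scalar (Fin 3) ((e⁻¹ : Kˣ) : K) := rfl
    rw [this, scalar_apply, ← smul_eq_diagonal_mul]
  have hiso : ∀ v : Fin 3 → K, q ((A' : Matrix (Fin 3) (Fin 3) K).mulVec v) = q v := by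
    intro v
    rw [hA'val, smul_mulVec, QuadraticMap.map_smul, hc, smul_eq_mul]
    have : (((e⁻¹:Kˣ):K) * ((e⁻¹:Kˣ):K)) * (c:K) = 1 := by
      rw [← he2]
      push_cast
      field_simp
    rw [← mul_assoc, this, one_mul]
  -- powers of A' are isometries
  have hisopow : ∀ (k : ℕ) (v : Fin 3 → K),
      q (((A' ^ k : GL (Fin 3) K) : Matrix (Fin 3) (Fin 3) K).mulVec v) = q v := by
    intro k
    induction k with
    | zero => intro v; simp
    | succ k ih =>
      intro v
      rw [pow_succ']
      show q (((A' : Matrix (Fin 3) (Fin 3) K) *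
        ((A' ^ k : GL (Fin 3) K) : Matrix (Fin 3) (Fin 3) K)).mulVec v) = q v
      rw [← Matrix.mulVec_mulVec, hiso, ih]
  -- g is the class of A'
  have hgA' : g = QuotientGroup.mk A' := by
    rw [hg, hA']
    have h1 : (QuotientGroup.mk (E⁻¹ * A) :
        GL (Fin 3) K ⧸ Subgroup.center (GL (Fin 3) K)) = QuotientGroup.mk E⁻¹ * QuotientGroup.mk A :=
      rfl
    rw [h1, QuotientGroup.eq_one_iff E⁻¹ |>.mpr (inv_mem hEcenter), one_mul]
  set n : ℕ := orderOf g with hn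
  have hgn : g ^ n = 1 := pow_orderOf_eq_one g
  have hA'n : A' ^ n ∈ Subgroup.center (GL (Fin 3) K) := by
    rw [← QuotientGroup.eq_one_iff]
    show (QuotientGroup.mk (A' ^ n) : GL (Fin 3) K ⧸ Subgroup.center (GL (Fin 3) K)) = 1
    have : (QuotientGroup.mk (A' ^ n) : GL (Fin 3) K ⧸ Subgroup.center (GL (Fin 3) K))
        = (QuotientGroup.mk A') ^ n := rfl
    rw [this, ← hgA', hgn]
  obtain ⟨μ, hμ⟩ := aux_center_scalar _ hA'n
  -- μ² = 1
  have hv0 : (Pi.single 0 1 : Fin 3 → K) ≠ 0 := by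
    intro h
    have := congrFun h 0
    simp at this
  have hqv0 : q (Pi.single 0 1 : Fin 3 → K) ≠ 0 := fun h => hv0 (hnopoints _ h)
  have hμ2 : μ ^ 2 = 1 := by
    have h1 := hisopow n (Pi.single 0 1)
    rw [hμ] at h1
    have h2 : (Matrix.scalar (Fin 3) μ).mulVec (Pi.single 0 1 : Fin 3 → K)
        = μ • (Pi.single 0 1 : Fin 3 → K) := by
      rw [scalar_apply, ← smul_one_eq_diagonal, smul_mulVec, one_mulVec]
    rw [h2, QuadraticMap.map_smul, smul_eq_mul] at h1
    have h3 : (μ ^ 2 - 1) * q (Pi.single 0 1 : Fin 3 → K) = 0 := by linear_combination h1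
    rcases mul_eq_zero.mp h3 with h | h
    · linear_combination h
    · exact absurd h hqv0
  -- A' has finite order n * 2
  have hA'm : A' ^ (n * 2) = 1 := by
    apply Units.ext
    rw [pow_mul]
    show (((A' ^ n : GL (Fin 3) K) ^ 2 : GL (Fin 3) K) : Matrix (Fin 3) (Fin 3) K) = 1
    rw [Units.val_pow_eq_pow_val, hμ, ← map_pow, hμ2, _root_.map_one]
  have hmpos : 0 < n * 2 := by positivity
  obtain ⟨ζ, hζ⟩ := hroots (n * 2) hmpos
  have hA'2 : A' ^ 2 = 1 := aux_sq_eq_one q hnopoints A' hiso (n * 2) hmpos ζ hζ hA'm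
  have hg2 : g ^ 2 = 1 := by
    rw [hgA']
    have : ((QuotientGroup.mk A' : GL (Fin 3) K ⧸ Subgroup.center (GL (Fin 3) K))) ^ 2
        = QuotientGroup.mk (A' ^ 2) := rfl
    rw [this, hA'2]
    rfl
  have hdvd : orderOf g ∣ 2 := orderOf_dvd_of_pow_eq_one hg2
  rcases (Nat.dvd_prime Nat.prime_two).mp hdvd with h | h
  · exact absurd (orderOf_eq_one_iff.mp h) hnontriv
  · exact h
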